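/- After the size-reduction update b_k := b_k - ⌈μ_{k,l}⌋ b_l with l < k, the new Gram-Schmidt coefficient μ'_{k,l} satisfies |Re(μ'_{k,l})| ≤ 1/2 and |Im(μ'_{k,l})| ≤ 1/2, and the coefficients μ_{i,j} for i ≠ k are unchanged. -/

import Mathlib

/-- Gram-Schmidt orthogonalization of a family of vectors in ℂⁿ. -/
noncomputable def gso {n : ℕ} (b : Fin n → EuclideanSpace ℂ (Fin n)) :
    Fin n → EuclideanSpace ℂ (Fin n) :=
  @InnerProductSpace.gramSchmidt ℂ _ _ _ _ (Fin n) _ _ (inferInstance : WellFoundedLT (Fin n)) b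

/-- Gram-Schmidt coefficient μ_{i,j} = ⟨bᵢ, b̂ⱼ⟩ / ‖b̂ⱼ‖². -/
noncomputable def mu {n : ℕ} (b : Fin n → EuclideanSpace ℂ (Fin n)) (i j : Fin n) : ℂ :=
  (inner ℂ (gso b j) (b i) : ℂ) / ((‖gso b j‖ ^ 2 : ℝ) : ℂ)

/-- Round a complex number by rounding real and imaginary parts to nearest integers. -/
noncomputable def roundC (z : ℂ) : ℂ :=
  ((round z.re : ℤ) : ℂ) + ((round z.im : ℤ) : ℂ) * Complex.I

open Submodule Set

section aux
variable {n : ℕ}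

lemma gso_sub_mem (f : Fin n → EuclideanSpace ℂ (Fin n)) (j : Fin n) :
    f j - gso f j ∈ span ℂ (f '' Set.Iio j) := by
  rw [← @InnerProductSpace.span_gramSchmidt_Iio ℂ _ _ _ _ (Fin n) _ _ (inferInstance : WellFoundedLT (Fin n)) f j]
  show f j - @InnerProductSpace.gramSchmidt ℂ _ _ _ _ (Fin n) _ _ (inferInstance : WellFoundedLT (Fin n)) f j ∈ _
  rw [@InnerProductSpace.gramSchmidt_def ℂ _ _ _ _ (Fin n) _ _ (inferInstance : WellFoundedLT (Fin n)) f j, sub_sub_cancel]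
  refine Submodule.sum_mem _ fun i hi => ?_
  have h : (ℂ ∙ (@InnerProductSpace.gramSchmidt ℂ _ _ _ _ (Fin n) _ _ (inferInstance : WellFoundedLT (Fin n)) f i)) ≤
      span ℂ ((@InnerProductSpace.gramSchmidt ℂ _ _ _ _ (Fin n) _ _ (inferInstance : WellFoundedLT (Fin n)) f) '' Set.Iio j) :=
    (span_singleton_le_iff_mem _ _).2 (subset_span ⟨i, Finset.mem_Iio.1 hi, rfl⟩)
  exact h (Submodule.coe_mem _)

lemma gso_orth (f : Fin n → EuclideanSpace ℂ (Fin n)) (j : Fin n) :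
    ∀ u ∈ span ℂ (f '' Set.Iio j), (inner ℂ (gso f j) u : ℂ) = 0 := by
  intro u hu
  induction hu using Submodule.span_induction with
  | mem x hx =>
    obtain ⟨i, hi, rfl⟩ := hx
    exact @InnerProductSpace.gramSchmidt_inv_triangular ℂ _ _ _ _ (Fin n) _ _ (inferInstance : WellFoundedLT (Fin n)) f _ _ hi
  | zero => simp
  | add x y _ _ hx hy => rw [inner_add_right, hx, hy, add_zero]
  | smul c x _ hx => rw [inner_smul_right, hx, mul_zero]

lemma gso_unique (S : Submodule ℂ (EuclideanSpace ℂ (Fin n)))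
    (x v w : EuclideanSpace ℂ (Fin n))
    (hv1 : x - v ∈ S) (hv2 : ∀ u ∈ S, (inner ℂ v u : ℂ) = 0)
    (hw1 : x - w ∈ S) (hw2 : ∀ u ∈ S, (inner ℂ w u : ℂ) = 0) : v = w := by
  have hmem : v - w ∈ S := by
    have := S.sub_mem hw1 hv1
    simpa using this
  have h : (inner ℂ (v - w) (v - w) : ℂ) = 0 := by
    rw [inner_sub_left, hv2 _ hmem, hw2 _ hmem, sub_zero]
  exact sub_eq_zero.1 (inner_self_eq_zero.1 h)

end aux

theorem stmt6 (n : ℕ) (b : Fin n → EuclideanSpace ℂ (Fin n)) (hb : LinearIndependent ℂ b)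
    (k l : Fin n) (hlk : l < k)
    (b' : Fin n → EuclideanSpace ℂ (Fin n))
    (hb' : b' = Function.update b k (b k - roundC (mu b k l) • b l)) :
    (|(mu b' k l).re| ≤ 1/2 ∧ |(mu b' k l).im| ≤ 1/2) ∧
    (∀ i j : Fin n, i ≠ k → mu b' i j = mu b i j) := by
  set c := roundC (mu b k l) with hc
  have hbk : b' k = b k - c • b l := by rw [hb']; simp
  have hbne : ∀ i, i ≠ k → b' i = b i := by
    intro i hi; rw [hb', Function.update_of_ne hi]
  -- span equality for every j
  have hspan : ∀ j : Fin n, span ℂ (b' '' Set.Iio j) = span ℂ (b '' Set.Iio j) := by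
    intro j
    apply le_antisymm
    · rw [Submodule.span_le]
      rintro _ ⟨i, hi, rfl⟩
      by_cases hik : i = k
      · subst hik
        rw [hbk]
        exact Submodule.sub_mem _ (subset_span ⟨i, hi, rfl⟩)
          (Submodule.smul_mem _ _ (subset_span ⟨l, lt_trans hlk hi, rfl⟩))
      · rw [hbne i hik]; exact subset_span ⟨i, hi, rfl⟩
    · rw [Submodule.span_le]
      rintro _ ⟨i, hi, rfl⟩
      by_cases hik : i = k
      · subst hik
        have : b i = b' i + c • b' l := by
          rw [hbk, hbne l (ne_of_lt hlk)]; abel_nf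
        rw [this]
        exact Submodule.add_mem _ (subset_span ⟨i, hi, rfl⟩)
          (Submodule.smul_mem _ _ (subset_span ⟨l, lt_trans hlk hi, rfl⟩))
      · rw [← hbne i hik]; exact subset_span ⟨i, hi, rfl⟩
  -- gso equality
  have hgso : ∀ j : Fin n, gso b' j = gso b j := by
    intro j
    refine gso_unique (span ℂ (b '' Set.Iio j)) (b' j) _ _ ?_ ?_
      ?_ (gso_orth b j)
    · rw [← hspan j]; exact gso_sub_mem b' j
    · intro u hu; rw [← hspan j] at hu; exact gso_orth b' j u hu
    · by_cases hjk : j = k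
      · subst hjk
        rw [hbk]
        have h1 := gso_sub_mem b j
        have h2 : b l ∈ span ℂ (b '' Set.Iio j) := subset_span ⟨l, hlk, rfl⟩
        have : b j - c • b l - gso b j = (b j - gso b j) - c • b l := by abel
        rw [this]
        exact Submodule.sub_mem _ h1 (Submodule.smul_mem _ _ h2)
      · rw [hbne j hjk]; exact gso_sub_mem b j
  have hmu : ∀ i j : Fin n, i ≠ k → mu b' i j = mu b i j := by
    intro i j hik
    rw [mu, mu, hgso j, hbne i hik]
  refine ⟨?_, hmu⟩
  -- the inner product of gso b l with b l is ‖gso b l‖²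
  have hgl : gso b l ≠ 0 := by
    have := @InnerProductSpace.gramSchmidt_ne_zero ℂ _ _ _ _ (Fin n) _ _ (inferInstance : WellFoundedLT (Fin n)) b l hb
    exact this
  have hinner : (inner ℂ (gso b l) (b l) : ℂ) = (‖gso b l‖ : ℂ) ^ 2 := by
    have hd : b l - gso b l ∈ span ℂ (b '' Set.Iio l) := gso_sub_mem b l
    have h0 : (inner ℂ (gso b l) (b l - gso b l) : ℂ) = 0 := gso_orth b l _ hd
    rw [inner_sub_right] at h0
    have := sub_eq_zero.1 h0
    rw [this, @inner_self_eq_norm_sq_to_K ℂ]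
    norm_num
  have hnorm : ((‖gso b l‖ ^ 2 : ℝ) : ℂ) ≠ 0 := by
    simp only [ne_eq, Complex.ofReal_eq_zero, pow_eq_zero_iff, norm_eq_zero]
    simpa using hgl
  have hmukl : mu b' k l = mu b k l - c := by
    rw [mu, hgso l, hbk, inner_sub_right, inner_smul_right, hinner, sub_div, mu]
    congr 1
    rw [mul_div_assoc]
    rw [div_eq_one_iff_eq hnorm |>.mpr (by push_cast; ring)]
    ring
  rw [hmukl, hc, roundC]
  constructor
  · simp only [Complex.sub_re, Complex.add_re, Complex.mul_re, Complex.I_re, Complex.I_im,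
      Complex.intCast_re, Complex.intCast_im]
    simpa using abs_sub_round (mu b k l).re
  · simp only [Complex.sub_im, Complex.add_im, Complex.mul_im, Complex.I_re, Complex.I_im,
      Complex.intCast_re, Complex.intCast_im]
    simpa using abs_sub_round (mu b k l).im
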